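/- Let M = [[A, B],[Bᵀ, 0]] be a symmetric saddle-point matrix over ℝ with A symmetric positive definite and B of full row rank, and let P = [[A, 0],[0, BA⁻¹Bᵀ]] be the block diagonal preconditioner. Then the preconditioned matrix P⁻¹M satisfies the polynomial identity (T − I)(T² − T − I) = 0, where T = P⁻¹M; in particular T has at most three distinct eigenvalues: 1, (1+√5)/2, and (1−√5)/2. -/

import Mathlib

open Matrix

theorem fromBlocks_sub {l o n m R : Type*} [Sub R] (A A' : Matrix n l R) (B B' : Matrix n m R)
    (C C' : Matrix o l R) (D D' : Matrix o m R) :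
    fromBlocks A B C D - fromBlocks A' B' C' D' =
      fromBlocks (A - A') (B - B') (C - C') (D - D') := by
  ext (i | i) (j | j) <;> rfl

theorem MGW_saddle_point_spectrum {n m : Type*}
    [Fintype n] [Fintype m] [DecidableEq n] [DecidableEq m]
    (A : Matrix n n ℝ) (B : Matrix m n ℝ)
    (hA : A.PosDef) (hB : B.rank = Fintype.card m)
    (M P T : Matrix (n ⊕ m) (n ⊕ m) ℝ)
    (hM : M = fromBlocks A Bᵀ B 0)
    (hP : P = fromBlocks A 0 0 (B * A⁻¹ * Bᵀ))
    (hT : T = P⁻¹ * M) :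
    (T - 1) * (T ^ 2 - T - 1) = 0 ∧
      ∀ (lam : ℝ) (x : (n ⊕ m) → ℝ), x ≠ 0 → T.mulVec x = lam • x →
        lam = 1 ∨ lam = (1 + Real.sqrt 5) / 2 ∨ lam = (1 - Real.sqrt 5) / 2 := by
  set S := B * A⁻¹ * Bᵀ with hS
  -- vecMul by B is injective since B has full row rank
  have hinj : ∀ y : m → ℝ, y ᵥ* B = 0 → y = 0 := by
    have hrk : Bᵀ.rank = Fintype.card m := by rw [Matrix.rank_transpose]; exact hB
    intro y hy
    have hker : LinearMap.ker (Bᵀ.mulVecLin) = ⊥ := by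
      have h1 := LinearMap.finrank_range_add_finrank_ker (Bᵀ.mulVecLin)
      rw [show Module.finrank ℝ (LinearMap.range Bᵀ.mulVecLin) = Bᵀ.rank from rfl, hrk,
        Module.finrank_fintype_fun_eq_card] at h1
      have : Module.finrank ℝ (LinearMap.ker Bᵀ.mulVecLin) = 0 := by omega
      exact Submodule.finrank_eq_zero.mp this
    have h2 : Bᵀ.mulVecLin y = 0 := by
      simpa [Matrix.mulVecLin_apply, Matrix.mulVec_transpose] using hy
    simpa using LinearMap.ker_eq_bot.mp hker (by simpa using h2)
  have hAinv : A⁻¹.PosDef := hA.inv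
  -- S is positive definite
  have hSpd : S.PosDef := by
    refine Matrix.PosDef.of_dotProduct_mulVec_pos ?_ ?_
    · have hAH : A⁻¹ᵀ = A⁻¹ := hAinv.isHermitian
      show Sᴴ = S
      show Sᵀ = S
      simp only [hS, transpose_mul, transpose_transpose, hAH]
      rw [Matrix.mul_assoc]
    · intro y hy
      have hz : Bᵀ *ᵥ y ≠ 0 := fun h => hy (hinj y (by rwa [← Matrix.mulVec_transpose]))
      have hpos := hAinv.dotProduct_mulVec_pos hz
      have e : star y ⬝ᵥ (S *ᵥ y) = star (Bᵀ *ᵥ y) ⬝ᵥ (A⁻¹ *ᵥ (Bᵀ *ᵥ y)) := by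
        simp only [star_trivial, hS, ← Matrix.mulVec_mulVec, dotProduct_mulVec,
          ← Matrix.mulVec_transpose]
      rw [e]; exact hpos
  have hAdet : IsUnit A.det := hA.det_pos.ne'.isUnit
  have hSdet : IsUnit S.det := hSpd.det_pos.ne'.isUnit
  -- the inverse of P
  have hPinv : P⁻¹ = fromBlocks A⁻¹ 0 0 S⁻¹ := by
    apply Matrix.inv_eq_right_inv
    rw [hP, fromBlocks_multiply]
    simp [Matrix.mul_nonsing_inv _ hAdet, Matrix.mul_nonsing_inv _ hSdet,
      ← fromBlocks_one]
  set X := A⁻¹ * Bᵀ with hX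
  set Y := S⁻¹ * B with hY
  have hT' : T = fromBlocks 1 X Y 0 := by
    rw [hT, hPinv, hM, fromBlocks_multiply]
    simp [Matrix.nonsing_inv_mul _ hAdet, hX, hY, Matrix.mul_assoc]
  have hYX : Y * X = 1 := by
    rw [hY, hX, Matrix.mul_assoc, ← Matrix.mul_assoc B, ← hS]
    exact Matrix.nonsing_inv_mul _ hSdet
  -- the polynomial identity
  have hpoly : (T - 1) * (T ^ 2 - T - 1) = 0 := by
    have hT2 : T ^ 2 = fromBlocks (1 + X * Y) X Y 1 := by
      rw [pow_two, hT', fromBlocks_multiply]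
      simp [hYX]
    have h1 : T ^ 2 - T - 1 = fromBlocks (X * Y - 1) 0 0 0 := by
      rw [hT2, hT', ← fromBlocks_one, fromBlocks_sub, fromBlocks_sub]
      congr 1 <;> abel
    have h2 : T - 1 = fromBlocks 0 X Y (-1) := by
      rw [hT', ← fromBlocks_one, fromBlocks_sub]
      congr 1 <;> simp
    rw [h1, h2, fromBlocks_multiply]
    have hY1 : Y * (X * Y - 1) = 0 := by
      rw [Matrix.mul_sub, ← Matrix.mul_assoc, hYX, Matrix.one_mul, Matrix.mul_one, sub_self]
    simp [hY1, ← fromBlocks_zero]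
  refine ⟨hpoly, ?_⟩
  intro lam x hx hev
  have hTx2 : (T ^ 2).mulVec x = (lam ^ 2) • x := by
    rw [pow_two, ← Matrix.mulVec_mulVec, hev, Matrix.mulVec_smul, hev, smul_smul, pow_two]
  have key : ((lam - 1) * (lam ^ 2 - lam - 1)) • x = 0 := by
    have h0 : (T - 1) *ᵥ ((T ^ 2 - T - 1) *ᵥ x) = 0 := by
      rw [Matrix.mulVec_mulVec, hpoly, Matrix.zero_mulVec]
    have hv : (T ^ 2 - T - 1) *ᵥ x = (lam ^ 2 - lam - 1) • x := by
      rw [Matrix.sub_mulVec, Matrix.sub_mulVec, hTx2, hev, Matrix.one_mulVec]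
      module
    rw [hv, Matrix.mulVec_smul, Matrix.sub_mulVec, hev, Matrix.one_mulVec] at h0
    rw [← h0]
    module
  have hscal : (lam - 1) * (lam ^ 2 - lam - 1) = 0 := by
    rcases smul_eq_zero.mp key with h | h
    · exact h
    · exact absurd h hx
  rcases mul_eq_zero.mp hscal with h | h
  · left; linarith
  · right
    have h5 : Real.sqrt 5 ^ 2 = 5 := Real.sq_sqrt (by norm_num)
    have hfac : (lam - (1 + Real.sqrt 5) / 2) * (lam - (1 - Real.sqrt 5) / 2) = 0 := by
      nlinarith [h5, h]
    rcases mul_eq_zero.mp hfac with h' | h'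
    · left; linarith
    · right; linarith
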